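/- If the normed space (ℝ^d, ⦀·⦀) is strictly convex, then for every k ∈ {0,…,d} one has {x ∈ ℝ^d : ℓ0(x) ≤ k} ∩ S = B_k ∩ S, where B_k is the unit ball of the coordinate-k norm (with the convention B_0 = {0}). -/

import Mathlib

open scoped BigOperators

noncomputable section

/-- The Euclidean pairing `⟨x,y⟩ = ∑ i, x i * y i` on `Fin d → ℝ`. -/
def dotp {d : ℕ} (x y : Fin d → ℝ) : ℝ := ∑ i, x i * y i

/-- The coordinate subspace `R_K` of vectors vanishing outside `K`. -/
def RK {d : ℕ} (K : Finset (Fin d)) : Set (Fin d → ℝ) := {x | ∀ j ∉ K, x j = 0}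

/-- Orthogonal projection onto `R_K`. -/
def projK {d : ℕ} (K : Finset (Fin d)) (x : Fin d → ℝ) : Fin d → ℝ :=
  fun i => if i ∈ K then x i else 0

/-- The ℓ0 pseudonorm: number of nonzero components. -/
def ell0 {d : ℕ} (x : Fin d → ℝ) : ℕ := (Function.support x).ncard

/-- `N` is a norm on `ℝ^d`. -/
structure IsNorm {d : ℕ} (N : (Fin d → ℝ) → ℝ) : Prop where
  eq_zero_iff : ∀ x, N x = 0 ↔ x = 0
  smul : ∀ (c : ℝ) (x : Fin d → ℝ), N (c • x) = |c| * N x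
  triangle : ∀ x y, N (x + y) ≤ N x + N y

/-- `⦀y⦀_{K,★}`: the dual norm (w.r.t. the Euclidean pairing), on the subspace `R_K`,
of the restriction of `N` to `R_K`. -/
def restStar {d : ℕ} (N : (Fin d → ℝ) → ℝ) (K : Finset (Fin d)) (y : Fin d → ℝ) : ℝ :=
  sSup {r | ∃ x ∈ RK K, N x ≤ 1 ∧ r = dotp x y}

/-- The dual coordinate-k norm `⦀y⦀_{k,★} = sup_{|K| ≤ k} ⦀y_K⦀_{K,★}`. -/
def dualCoord {d : ℕ} (N : (Fin d → ℝ) → ℝ) (k : ℕ) (y : Fin d → ℝ) : ℝ :=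
  sSup {r | ∃ K : Finset (Fin d), K.card ≤ k ∧ r = restStar N K (projK K y)}

/-- The coordinate-k norm: the dual norm of the dual coordinate-k norm. -/
def coordNorm {d : ℕ} (N : (Fin d → ℝ) → ℝ) (k : ℕ) (x : Fin d → ℝ) : ℝ :=
  sSup {r | ∃ y : Fin d → ℝ, dualCoord N k y ≤ 1 ∧ r = dotp x y}

/-- The unit ball of the coordinate-k norm, with the convention `B_0 = {0}`. -/
def coordBall {d : ℕ} (N : (Fin d → ℝ) → ℝ) (k : ℕ) : Set (Fin d → ℝ) :=
  if k = 0 then {0} else {x | coordNorm N k x ≤ 1}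


section AuxLemmas

namespace IsNorm
variable {d : ℕ} {N : (Fin d → ℝ) → ℝ} (hN : IsNorm N)
include hN

lemma zero : N 0 = 0 := (hN.eq_zero_iff 0).2 rfl

lemma neg' (x : Fin d → ℝ) : N (-x) = N x := by
  have := hN.smul (-1) x; simpa using this

lemma nonneg (x : Fin d → ℝ) : 0 ≤ N x := by
  have h := hN.triangle x (-x)
  rw [add_neg_cancel, hN.zero, hN.neg'] at h
  linarith

lemma pos {x : Fin d → ℝ} (hx : x ≠ 0) : 0 < N x :=
  lt_of_le_of_ne (hN.nonneg x) fun h => hx ((hN.eq_zero_iff x).1 h.symm)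

lemma sum_le {ι : Type*} (s : Finset ι) (f : ι → Fin d → ℝ) :
    N (∑ i ∈ s, f i) ≤ ∑ i ∈ s, N (f i) := by
  classical
  induction s using Finset.cons_induction with
  | empty => simp [hN.zero]
  | cons a s ha ih =>
    rw [Finset.sum_cons, Finset.sum_cons]
    exact (hN.triangle _ _).trans (by linarith)

lemma le_opnorm (x : Fin d → ℝ) :
    N x ≤ (∑ i, N (fun j => if i = j then (1:ℝ) else 0)) * ‖x‖ := by
  calc N x = N (∑ i, (x i) • fun j => if i = j then (1:ℝ) else 0) := by
        rw [← pi_eq_sum_univ x]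
    _ ≤ ∑ i, N ((x i) • fun j => if i = j then (1:ℝ) else 0) := hN.sum_le _ _
    _ = ∑ i, |x i| * N (fun j => if i = j then (1:ℝ) else 0) := by
        simp [hN.smul]
    _ ≤ ∑ i, ‖x‖ * N (fun j => if i = j then (1:ℝ) else 0) := by
        apply Finset.sum_le_sum
        intro i _
        exact mul_le_mul_of_nonneg_right (by simpa using norm_le_pi_norm x i) (hN.nonneg _)
    _ = (∑ i, N (fun j => if i = j then (1:ℝ) else 0)) * ‖x‖ := by
        rw [Finset.sum_mul]
        exact Finset.sum_congr rfl fun i _ => mul_comm _ _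

lemma continuous : Continuous N := by
  set C := ∑ i, N (fun j => if i = j then (1:ℝ) else 0) with hC
  have hC0 : 0 ≤ C := Finset.sum_nonneg fun i _ => hN.nonneg _
  have : LipschitzWith ⟨C, hC0⟩ N := by
    apply LipschitzWith.of_dist_le_mul
    intro x y
    rw [Real.dist_eq, dist_eq_norm]
    have h1 : N x - N y ≤ N (x - y) := by
      have := hN.triangle (x - y) y; simp at this; linarith
    have h2 : N y - N x ≤ N (x - y) := by
      have := hN.triangle (y - x) x
      simp at this
      have e : N (y - x) = N (x - y) := by rw [← hN.neg' (x - y)]; ring_nf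
      linarith
    have := hN.le_opnorm (x - y)
    rw [abs_le]; change -(C * ‖x - y‖) ≤ N x - N y ∧ N x - N y ≤ C * ‖x - y‖; constructor <;> nlinarith
  exact this.continuous

lemma exists_lower : ∃ m : ℝ, 0 < m ∧ ∀ x, m * ‖x‖ ≤ N x := by
  rcases subsingleton_or_nontrivial (Fin d → ℝ) with h | h
  · exact ⟨1, one_pos, fun x => by
      rw [Subsingleton.elim x 0]; simp [hN.zero]⟩
  · have hsne : (Metric.sphere (0 : Fin d → ℝ) 1).Nonempty :=
      NormedSpace.sphere_nonempty.2 zero_le_one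
    obtain ⟨x₀, hx₀s, hx₀min⟩ :=
      (isCompact_sphere (0 : Fin d → ℝ) 1).exists_isMinOn hsne hN.continuous.continuousOn
    have hx₀n : ‖x₀‖ = 1 := by simpa using hx₀s
    have hx₀ : x₀ ≠ 0 := by intro h0; rw [h0] at hx₀n; simp at hx₀n
    refine ⟨N x₀, hN.pos hx₀, fun x => ?_⟩
    rcases eq_or_ne x 0 with rfl | hx
    · simp [hN.zero]
    · have hxn : ‖x‖ ≠ 0 := norm_ne_zero_iff.2 hx
      have hmem : ‖x‖⁻¹ • x ∈ Metric.sphere (0 : Fin d → ℝ) 1 := by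
        simp [norm_smul, abs_of_nonneg (inv_nonneg.2 (norm_nonneg x)), inv_mul_cancel₀ hxn]
      have := hx₀min hmem
      simp only [Set.mem_setOf_eq] at this
      have h2 : N (‖x‖⁻¹ • x) = ‖x‖⁻¹ * N x := by
        rw [hN.smul]; congr 1; exact abs_of_nonneg (inv_nonneg.2 (norm_nonneg x))
      rw [h2] at this
      have hpos : (0:ℝ) < ‖x‖ := lt_of_le_of_ne (norm_nonneg x) (Ne.symm hxn)
      rw [mul_comm]
      calc ‖x‖ * N x₀ ≤ ‖x‖ * (‖x‖⁻¹ * N x) := by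
            apply mul_le_mul_of_nonneg_left this (norm_nonneg x)
        _ = N x := by field_simp

lemma convex_ball : Convex ℝ {z : Fin d → ℝ | N z ≤ 1} := by
  intro a ha b hb p q hp hq hpq
  simp only [Set.mem_setOf_eq] at *
  calc N (p • a + q • b) ≤ N (p • a) + N (q • b) := hN.triangle _ _
    _ = |p| * N a + |q| * N b := by rw [hN.smul, hN.smul]
    _ ≤ p * 1 + q * 1 := by
        rw [abs_of_nonneg hp, abs_of_nonneg hq]
        exact add_le_add (mul_le_mul_of_nonneg_left ha hp) (mul_le_mul_of_nonneg_left hb hq)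
    _ = 1 := by linarith

end IsNorm

open Set in
lemma isCompact_convexHull_fin {d : ℕ} {s : Set (Fin d → ℝ)} (hs : IsCompact s)
    (hne : s.Nonempty) : IsCompact (convexHull ℝ s) := by
  classical
  obtain ⟨s₀, hs₀⟩ := hne
  set n := d + 1 with hn
  set Φ : (Fin n → ℝ) × (Fin n → (Fin d → ℝ)) → (Fin d → ℝ) :=
    fun p => ∑ i, p.1 i • p.2 i with hΦ
  have hcont : Continuous Φ := by
    apply continuous_finset_sum
    intro i _
    exact ((continuous_apply i).comp continuous_fst).smul
      ((continuous_apply i).comp continuous_snd)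
  have hdom : IsCompact ((stdSimplex ℝ (Fin n)) ×ˢ (Set.univ.pi fun _ : Fin n => s)) :=
    (isCompact_stdSimplex (𝕜 := ℝ) (ι := Fin n)).prod (isCompact_univ_pi fun _ => hs)
  have himg : convexHull ℝ s
      = Φ '' ((stdSimplex ℝ (Fin n)) ×ˢ (Set.univ.pi fun _ : Fin n => s)) := by
    apply Subset.antisymm
    · intro x hx
      obtain ⟨ι, hι, z, w, hzs, hai, hw, hw1, hsum⟩ := eq_pos_convex_span_of_mem_convexHull hx
      have hcard : Fintype.card ι ≤ n := by
        have h1 := hai.card_le_finrank_succ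
        have h2 : Module.finrank ℝ (vectorSpan ℝ (Set.range z)) ≤ d := by
          have := Submodule.finrank_le (vectorSpan ℝ (Set.range z))
          simpa using this
        omega
      obtain ⟨f⟩ := Function.Embedding.nonempty_of_card_le (α := ι) (β := Fin n)
        (by simpa using hcard)
      have hne : Nonempty ι := by
        by_contra h
        rw [not_nonempty_iff] at h
        rw [Finset.univ_eq_empty, Finset.sum_empty] at hw1
        norm_num at hw1
      set g : Fin n → ι := Function.invFun f with hg
      have hgf : ∀ i : ι, g (f i) = i := fun i => Function.leftInverse_invFun f.injective i
      set w' : Fin n → ℝ := fun j => if j ∈ Finset.univ.image f then w (g j) else 0 with hw'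
      set z' : Fin n → (Fin d → ℝ) := fun j => if j ∈ Finset.univ.image f then z (g j) else s₀
        with hz'
      have hsum_w' : ∑ j, w' j = ∑ i, w i := by
        rw [← Finset.sum_subset (Finset.subset_univ (Finset.univ.image f))
          (fun j _ hj => by simp only [hw']; rw [if_neg hj])]
        rw [Finset.sum_image (fun a _ b _ h => f.injective h)]
        exact Finset.sum_congr rfl fun i _ => by simp [hw', hgf i]
      have hsum_wz : ∑ j, w' j • z' j = ∑ i, w i • z i := by
        rw [← Finset.sum_subset (Finset.subset_univ (Finset.univ.image f))
          (fun j _ hj => by simp only [hw']; rw [if_neg hj, zero_smul])]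
        rw [Finset.sum_image (fun a _ b _ h => f.injective h)]
        refine Finset.sum_congr rfl fun i _ => by
          simp [hw', hz', hgf i]
      refine ⟨(w', z'), ⟨?_, ?_⟩, ?_⟩
      · constructor
        · intro j
          by_cases hj : j ∈ Finset.univ.image f
          · simp only [hw', hj, if_pos]
            exact (hw _).le
          · simp only [hw']; rw [if_neg hj]
        · rw [hsum_w', hw1]
      · intro j _
        by_cases hj : j ∈ Finset.univ.image f
        · simp only [hz', hj, if_pos]
          exact hzs ⟨g j, rfl⟩
        · simp only [hz']; rw [if_neg hj]; exact hs₀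
      · simpa [hΦ, hsum_wz] using hsum
    · rintro x ⟨⟨wv, zv⟩, ⟨⟨hw0, hw1⟩, hz⟩, rfl⟩
      exact (convex_convexHull ℝ s).sum_mem (fun i _ => hw0 i) hw1
        (fun i _ => subset_convexHull ℝ s (hz i (Set.mem_univ i)))
  rw [himg]
  exact hdom.image hcont

section DualAux
variable {d : ℕ} {N : (Fin d → ℝ) → ℝ}

lemma dotp_zero_left (y : Fin d → ℝ) : dotp 0 y = 0 := by simp [dotp]

lemma dotp_smul_right (c : ℝ) (x y : Fin d → ℝ) : dotp x (c • y) = c * dotp x y := by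
  simp only [dotp, Pi.smul_apply, smul_eq_mul, Finset.mul_sum]
  exact Finset.sum_congr rfl fun i _ => by ring

lemma zero_mem_RK (K : Finset (Fin d)) : (0 : Fin d → ℝ) ∈ RK K := fun _ _ => rfl

lemma dotp_projK_of_mem {K : Finset (Fin d)} {x : Fin d → ℝ} (hx : x ∈ RK K)
    (y : Fin d → ℝ) : dotp x (projK K y) = dotp x y := by
  unfold dotp projK
  refine Finset.sum_congr rfl fun i _ => ?_
  by_cases hi : i ∈ K
  · rw [if_pos hi]
  · rw [hx i hi]; ring

lemma dotp_le_abs (x y : Fin d → ℝ) : dotp x y ≤ ∑ i, |x i| * |y i| := by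
  refine Finset.sum_le_sum fun i _ => ?_
  calc x i * y i ≤ |x i * y i| := le_abs_self _
    _ = |x i| * |y i| := abs_mul _ _

lemma IsNorm.dotp_bound (hN : IsNorm N) :
    ∃ C : ℝ, 0 ≤ C ∧ ∀ x y : Fin d → ℝ, N x ≤ 1 → dotp x y ≤ C * ∑ i, |y i| := by
  obtain ⟨m, hm0, hm⟩ := hN.exists_lower
  refine ⟨m⁻¹, (inv_nonneg.2 hm0.le), fun x y hx => ?_⟩
  have hxn : ‖x‖ ≤ m⁻¹ := by
    have h1 : m * ‖x‖ ≤ 1 := le_trans (hm x) hx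
    calc ‖x‖ = m⁻¹ * (m * ‖x‖) := by field_simp
      _ ≤ m⁻¹ * 1 := mul_le_mul_of_nonneg_left h1 (inv_nonneg.2 hm0.le)
      _ = m⁻¹ := mul_one _
  calc dotp x y ≤ ∑ i, |x i| * |y i| := dotp_le_abs x y
    _ ≤ ∑ i, m⁻¹ * |y i| := by
        refine Finset.sum_le_sum fun i _ => ?_
        refine mul_le_mul_of_nonneg_right ?_ (abs_nonneg _)
        exact le_trans (by simpa using norm_le_pi_norm x i) hxn
    _ = m⁻¹ * ∑ i, |y i| := by rw [Finset.mul_sum]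

lemma restStar_bddAbove (hN : IsNorm N) (K : Finset (Fin d)) (y : Fin d → ℝ) :
    BddAbove {r | ∃ x ∈ RK K, N x ≤ 1 ∧ r = dotp x y} := by
  obtain ⟨C, hC0, hC⟩ := hN.dotp_bound
  refine ⟨C * ∑ i, |y i|, ?_⟩
  rintro r ⟨x, _, hNx, rfl⟩
  exact hC x y hNx

lemma dotp_le_restStar (hN : IsNorm N) {K : Finset (Fin d)} {x : Fin d → ℝ}
    (hx : x ∈ RK K) (hNx : N x ≤ 1) (y : Fin d → ℝ) : dotp x y ≤ restStar N K y :=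
  le_csSup (restStar_bddAbove hN K y) ⟨x, hx, hNx, rfl⟩

lemma restStar_nonneg (hN : IsNorm N) (K : Finset (Fin d)) (y : Fin d → ℝ) :
    0 ≤ restStar N K y := by
  have := dotp_le_restStar hN (zero_mem_RK K) (by rw [hN.zero]; norm_num) y
  rwa [dotp_zero_left] at this

lemma restStar_le (hN : IsNorm N) {K : Finset (Fin d)} {y : Fin d → ℝ} {b : ℝ}
    (hb0 : 0 ≤ b) (hb : ∀ x ∈ RK K, N x ≤ 1 → dotp x y ≤ b) : restStar N K y ≤ b := by
  apply Real.sSup_le _ hb0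
  rintro r ⟨x, hx, hNx, rfl⟩
  exact hb x hx hNx

lemma dualCoord_bddAbove (N : (Fin d → ℝ) → ℝ) (k : ℕ) (y : Fin d → ℝ) :
    BddAbove {r | ∃ K : Finset (Fin d), K.card ≤ k ∧ r = restStar N K (projK K y)} := by
  apply Set.Finite.bddAbove
  apply (Set.finite_range fun K : Finset (Fin d) => restStar N K (projK K y)).subset
  rintro r ⟨K, _, rfl⟩
  exact ⟨K, rfl⟩

lemma restStar_le_dualCoord (N : (Fin d → ℝ) → ℝ) {k : ℕ} {K : Finset (Fin d)}
    (hK : K.card ≤ k) (y : Fin d → ℝ) :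
    restStar N K (projK K y) ≤ dualCoord N k y :=
  le_csSup (dualCoord_bddAbove N k y) ⟨K, hK, rfl⟩

lemma dualCoord_le (hN : IsNorm N) {k : ℕ} {y : Fin d → ℝ} {b : ℝ}
    (hb : ∀ K : Finset (Fin d), K.card ≤ k → restStar N K (projK K y) ≤ b) :
    dualCoord N k y ≤ b := by
  have hb0 : 0 ≤ b :=
    le_trans (restStar_nonneg hN ∅ (projK ∅ y)) (hb ∅ (by simp))
  apply Real.sSup_le _ hb0
  rintro r ⟨K, hK, rfl⟩
  exact hb K hK

lemma dotp_le_dualCoord (hN : IsNorm N) {k : ℕ} {K : Finset (Fin d)} {x : Fin d → ℝ}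
    (hx : x ∈ RK K) (hNx : N x ≤ 1) (hK : K.card ≤ k) (y : Fin d → ℝ) :
    dotp x y ≤ dualCoord N k y := by
  calc dotp x y = dotp x (projK K y) := (dotp_projK_of_mem hx y).symm
    _ ≤ restStar N K (projK K y) := dotp_le_restStar hN hx hNx _
    _ ≤ dualCoord N k y := restStar_le_dualCoord N hK _

end DualAux

end AuxLemmas

theorem statement9 {d : ℕ} (N : (Fin d → ℝ) → ℝ) (hN : IsNorm N)
    (hsc : ∀ x : Fin d → ℝ, N x = 1 → x ∈ Set.extremePoints ℝ {z : Fin d → ℝ | N z ≤ 1})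
    (k : ℕ) (hk : k ≤ d) :
    {x : Fin d → ℝ | ell0 x ≤ k} ∩ {x | N x = 1} = coordBall N k ∩ {x | N x = 1} := by
  classical
  rcases Nat.eq_zero_or_pos k with hk0 | hk1
  · subst hk0
    ext x
    simp only [Set.mem_inter_iff, Set.mem_setOf_eq, coordBall, if_pos rfl,
      Set.mem_singleton_iff]
    constructor
    · rintro ⟨h0, h1⟩
      exfalso
      have hfin : (Function.support x).Finite := Set.toFinite _
      have hsupp : Function.support x = ∅ := by
        rw [← Set.ncard_eq_zero hfin]
        have : ell0 x = 0 := Nat.le_zero.1 h0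
        exact this
      have hx0 : x = 0 := Function.support_eq_empty_iff.1 hsupp
      rw [hx0, hN.zero] at h1; norm_num at h1
    · rintro ⟨h0, h1⟩
      exfalso
      rw [h0, hN.zero] at h1; norm_num at h1
  · have hkne : k ≠ 0 := hk1.ne'
    ext x
    simp only [Set.mem_inter_iff, Set.mem_setOf_eq, coordBall, if_neg hkne]
    constructor
    · rintro ⟨h0, h1⟩
      refine ⟨?_, h1⟩
      apply Real.sSup_le _ zero_le_one
      rintro r ⟨y, hy, rfl⟩
      have hfin : (Function.support x).Finite := Set.toFinite _
      set K := hfin.toFinset with hKdef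
      have hxK : x ∈ RK K := by
        intro j hj
        by_contra hxj
        exact hj (hfin.mem_toFinset.2 hxj)
      have hcard : K.card ≤ k := by
        have he : ell0 x = K.card := Set.ncard_eq_toFinset_card _ hfin
        omega
      exact le_trans (dotp_le_dualCoord hN hxK (le_of_eq h1) hcard y) hy
    · rintro ⟨h0, h1⟩
      refine ⟨?_, h1⟩
      set U : Set (Fin d → ℝ) := {u | ∃ K : Finset (Fin d), K.card ≤ k ∧ u ∈ RK K ∧ N u ≤ 1}
        with hU
      have h0U : (0 : Fin d → ℝ) ∈ U :=
        ⟨∅, by simp, zero_mem_RK ∅, by rw [hN.zero]; norm_num⟩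
      have hUball : U ⊆ {z | N z ≤ 1} := by rintro u ⟨K, _, _, hu⟩; exact hu
      obtain ⟨m, hm0, hm⟩ := hN.exists_lower
      have hballbd : {z : Fin d → ℝ | N z ≤ 1} ⊆ Metric.closedBall 0 m⁻¹ := by
        intro z hz
        rw [Metric.mem_closedBall, dist_zero_right]
        have h1' : m * ‖z‖ ≤ 1 := le_trans (hm z) hz
        calc ‖z‖ = m⁻¹ * (m * ‖z‖) := by field_simp
          _ ≤ m⁻¹ * 1 := mul_le_mul_of_nonneg_left h1' (inv_nonneg.2 hm0.le)
          _ = m⁻¹ := mul_one _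
      have hballclosed : IsClosed {z : Fin d → ℝ | N z ≤ 1} :=
        IsClosed.preimage hN.continuous isClosed_Iic
      have hRKclosed : ∀ K : Finset (Fin d), IsClosed (RK K) := by
        intro K
        have hrk : RK K = ⋂ (j : Fin d) (_ : j ∉ K), (fun z : Fin d → ℝ => z j) ⁻¹' {0} := by
          ext z; simp [RK, Set.mem_iInter]
        rw [hrk]
        exact isClosed_iInter fun j => isClosed_iInter fun _ =>
          IsClosed.preimage (continuous_apply j) isClosed_singleton
      have hUcomp : IsCompact U := by
        have hUeq : U = ⋃ K : Finset (Fin d),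
            (if K.card ≤ k then RK K ∩ {z | N z ≤ 1} else ∅) := by
          ext u
          simp only [Set.mem_iUnion, hU, Set.mem_setOf_eq]
          constructor
          · rintro ⟨K, hK, h2, h3⟩
            exact ⟨K, by rw [if_pos hK]; exact ⟨h2, h3⟩⟩
          · rintro ⟨K, hKmem⟩
            by_cases hK : K.card ≤ k
            · rw [if_pos hK] at hKmem; exact ⟨K, hK, hKmem.1, hKmem.2⟩
            · rw [if_neg hK] at hKmem; exact absurd hKmem (Set.notMem_empty u)
        rw [hUeq]
        apply isCompact_iUnion
        intro K
        by_cases hK : K.card ≤ k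
        · rw [if_pos hK]
          apply Metric.isCompact_of_isClosed_isBounded
          · exact (hRKclosed K).inter hballclosed
          · exact Metric.isBounded_closedBall.subset
              (Set.inter_subset_right.trans hballbd)
        · rw [if_neg hK]; exact isCompact_empty
      have hhull : x ∈ convexHull ℝ U := by
        by_contra hxh
        obtain ⟨f, c, hfc, hcx⟩ := geometric_hahn_banach_closed_point
          (convex_convexHull ℝ U) (isCompact_convexHull_fin hUcomp ⟨0, h0U⟩).isClosed hxh
        set y : Fin d → ℝ := fun i => f (fun j => if i = j then 1 else 0) with hy
        have hrep : ∀ z : Fin d → ℝ, f z = dotp z y := by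
          intro z
          conv_lhs => rw [pi_eq_sum_univ z]
          rw [map_sum]
          unfold dotp
          refine Finset.sum_congr rfl fun i _ => ?_
          rw [map_smul, hy]
          simp
        have hc0 : 0 < c := by
          have h00 := hfc 0 (subset_convexHull ℝ U h0U)
          simpa using h00
        set y' := c⁻¹ • y with hy'
        have hdc : dualCoord N k y' ≤ 1 := by
          apply dualCoord_le hN
          intro K hK
          apply restStar_le hN zero_le_one
          intro u hu hNu
          rw [dotp_projK_of_mem hu, hy', dotp_smul_right]
          have hfu : dotp u y < c := by
            rw [← hrep]
            exact hfc u (subset_convexHull ℝ U ⟨K, hK, hu, hNu⟩)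
          calc c⁻¹ * dotp u y ≤ c⁻¹ * c :=
                mul_le_mul_of_nonneg_left hfu.le (inv_nonneg.2 hc0.le)
            _ = 1 := inv_mul_cancel₀ hc0.ne'
        have hybd : ∀ y₀ : Fin d → ℝ, dualCoord N k y₀ ≤ 1 → ∀ i,
            |y₀ i| ≤ N (fun j => if i = j then 1 else 0) := by
          intro y₀ hy₀ i
          set e : Fin d → ℝ := fun j => if i = j then 1 else 0 with he
          have hei : e ≠ 0 := by
            intro hh; have := congrFun hh i; simp [he] at this
          have hNe : 0 < N e := hN.pos hei
          have key : ∀ s : ℝ, |s| = 1 → (s * (N e)⁻¹) * y₀ i ≤ 1 := by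
            intro s hs
            set w : Fin d → ℝ := (s * (N e)⁻¹) • e with hw
            have hwK : w ∈ RK {i} := by
              intro j hj
              simp only [Finset.mem_singleton] at hj
              simp [hw, he, Ne.symm hj]
            have hNw : N w ≤ 1 := by
              rw [hw, hN.smul, abs_mul, hs, one_mul, abs_inv, abs_of_pos hNe,
                inv_mul_cancel₀ hNe.ne']
            have hdot : dotp w (projK {i} y₀) = (s * (N e)⁻¹) * y₀ i := by
              unfold dotp
              rw [Finset.sum_eq_single i]
              · simp [hw, he, projK]
              · intro j _ hj
                simp [hw, he, Ne.symm hj]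
              · simp
            calc (s * (N e)⁻¹) * y₀ i = dotp w (projK {i} y₀) := hdot.symm
              _ ≤ restStar N {i} (projK {i} y₀) := dotp_le_restStar hN hwK hNw _
              _ ≤ dualCoord N k y₀ :=
                  restStar_le_dualCoord N (by simpa using Nat.succ_le_of_lt hk1) y₀
              _ ≤ 1 := hy₀
          have k1 := key 1 (by norm_num)
          have k2 := key (-1) (by norm_num)
          have habs : (N e)⁻¹ * |y₀ i| ≤ 1 := by
            rcases abs_cases (y₀ i) with ⟨hc, _⟩ | ⟨hc, _⟩
            · rw [hc]; linarith [k1]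
            · rw [hc]; linarith [k2]
          calc |y₀ i| = N e * ((N e)⁻¹ * |y₀ i|) := by field_simp
            _ ≤ N e * 1 := mul_le_mul_of_nonneg_left habs hNe.le
            _ = N e := mul_one _
        have hbdd : BddAbove {r | ∃ y₀ : Fin d → ℝ, dualCoord N k y₀ ≤ 1 ∧ r = dotp x y₀} := by
          refine ⟨∑ i, |x i| * N (fun j => if i = j then 1 else 0), ?_⟩
          rintro r ⟨y₀, hy₀, rfl⟩
          calc dotp x y₀ ≤ ∑ i, |x i| * |y₀ i| := dotp_le_abs x y₀
            _ ≤ ∑ i, |x i| * N (fun j => if i = j then 1 else 0) :=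
              Finset.sum_le_sum fun i _ =>
                mul_le_mul_of_nonneg_left (hybd y₀ hy₀ i) (abs_nonneg _)
        have hge : dotp x y' ≤ coordNorm N k x := le_csSup hbdd ⟨y', hdc, rfl⟩
        have hgt : 1 < dotp x y' := by
          rw [hy', dotp_smul_right, ← hrep]
          calc (1:ℝ) = c⁻¹ * c := (inv_mul_cancel₀ hc0.ne').symm
            _ < c⁻¹ * f x := mul_lt_mul_of_pos_left hcx (inv_pos.2 hc0)
        have : coordNorm N k x ≤ 1 := h0
        linarith
      have hhb : convexHull ℝ U ⊆ {z | N z ≤ 1} := convexHull_min hUball hN.convex_ball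
      have hex := hsc x h1
      rw [mem_extremePoints] at hex
      have hex2 : x ∈ (convexHull ℝ U).extremePoints ℝ := by
        rw [mem_extremePoints]
        exact ⟨hhull, fun x₁ h₁ x₂ h₂ hseg => hex.2 x₁ (hhb h₁) x₂ (hhb h₂) hseg⟩
      obtain ⟨K, hK, hxRK, -⟩ := extremePoints_convexHull_subset hex2
      have hsub : Function.support x ⊆ ↑K := by
        intro j hj
        by_contra hjK
        exact hj (hxRK j hjK)
      have : ell0 x ≤ K.card := by
        calc ell0 x ≤ (↑K : Set (Fin d)).ncard := Set.ncard_le_ncard hsub K.finite_toSet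
          _ = K.card := Set.ncard_coe_finset K
      omega
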